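/- Let Y be a finite set, ν a probability distribution over probability distributions p on Y, with a random subset F ⊆ Y (the facts, measurable with respect to p, satisfying supp(p) ⊆ F). Fix O ⊆ Y with O ⊆ F almost surely under ν, set U := Y \ O and H := Y \ F. Then for any fixed probability distribution g on Y and any fixed partition Π of Y: E_{p∼ν}[max(p(U) − ‖p^Π − g‖_TV − g(H), 0)] ≤ max_{y∈U} Pr_{p∼ν}[y ∈ F] + |O| · max_{y∈U} E_{p∼ν}[p(y)]. -/

import Mathlib

open Finset

/-- A partition of a finite type `Y`, given as the map sending each element to its block. -/
def IsBlockFun {Y : Type*} [Fintype Y] (π : Y → Finset Y) : Prop :=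
  (∀ y, y ∈ π y) ∧ ∀ y z, z ∈ π y → π z = π y

/-- The `π`-coarsening of `p`: each element gets the average of `p` over its block. -/
noncomputable def coarsen {Y : Type*} [Fintype Y] (p : Y → ℝ) (π : Y → Finset Y) (y : Y) : ℝ :=
  (∑ z ∈ π y, p z) / (π y).card

section Aux

variable {Y : Type*} [Fintype Y] [DecidableEq Y] {π : Y → Finset Y}

lemma block_symm (hπ : IsBlockFun π) {y z : Y} : z ∈ π y ↔ y ∈ π z := by
  constructor
  · intro h; rw [hπ.2 y z h]; exact hπ.1 y
  · intro h; rw [hπ.2 z y h]; exact hπ.1 z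

lemma block_card_pos (hπ : IsBlockFun π) (y : Y) : 0 < (π y).card :=
  Finset.card_pos.2 ⟨y, hπ.1 y⟩

lemma swap1 (hπ : IsBlockFun π) (f : Y → ℝ) (T : Finset Y) :
    ∑ y ∈ T, (∑ z ∈ π y ∩ T, f z) / ((π y).card : ℝ)
      = ∑ z ∈ T, f z * (((π z ∩ T).card : ℝ) / ((π z).card : ℝ)) := by
  have e1 : ∀ y ∈ T, (∑ z ∈ π y ∩ T, f z) / ((π y).card : ℝ)
      = ∑ z ∈ T, if z ∈ π y then f z / ((π y).card : ℝ) else 0 := by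
    intro y _
    rw [← Finset.sum_filter, Finset.filter_mem_eq_inter, Finset.inter_comm, Finset.sum_div]
  rw [Finset.sum_congr rfl e1, Finset.sum_comm]
  refine Finset.sum_congr rfl fun z _ => ?_
  have e2 : ∀ y ∈ T, (if z ∈ π y then f z / ((π y).card : ℝ) else 0)
      = if y ∈ π z then f z / ((π z).card : ℝ) else 0 := by
    intro y _
    by_cases h : z ∈ π y
    · rw [if_pos h, if_pos ((block_symm hπ).1 h), hπ.2 y z h]
    · rw [if_neg h, if_neg fun h' => h ((block_symm hπ).2 h')]
  rw [Finset.sum_congr rfl e2, ← Finset.sum_filter, Finset.filter_mem_eq_inter,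
    Finset.sum_const, Finset.inter_comm, nsmul_eq_mul]
  ring

lemma swap2 (hπ : IsBlockFun π) (f : Y → ℝ) :
    ∑ y : Y, (∑ z ∈ π y, f z) / ((π y).card : ℝ) = ∑ z : Y, f z := by
  have h := swap1 hπ f Finset.univ
  simp only [Finset.inter_univ] at h
  rw [h]
  refine Finset.sum_congr rfl fun z _ => ?_
  rw [div_self, mul_one]
  exact_mod_cast (block_card_pos hπ z).ne'

lemma coarsen_sum (hπ : IsBlockFun π) (p : Y → ℝ) :
    ∑ y : Y, coarsen p π y = ∑ y : Y, p y := by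
  simp only [coarsen]
  exact swap2 hπ p

end Aux

theorem stmt4 {ι Y : Type*} [Fintype ι] [Fintype Y] [DecidableEq Y]
    (w : ι → ℝ) (hw : ∀ i, 0 ≤ w i) (hw1 : ∑ i, w i = 1)
    (p : ι → Y → ℝ) (hp : ∀ i y, 0 ≤ p i y) (hp1 : ∀ i, ∑ y, p i y = 1)
    (F : ι → Finset Y) (hsupp : ∀ i, w i ≠ 0 → ∀ y, p i y ≠ 0 → y ∈ F i)
    (O : Finset Y) (hO : ∀ i, w i ≠ 0 → O ⊆ F i) (hU : (Oᶜ : Finset Y).Nonempty)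
    (g : Y → ℝ) (hg : ∀ y, 0 ≤ g y) (hg1 : ∑ y, g y = 1)
    (π : Y → Finset Y) (hπ : IsBlockFun π) :
    ∑ i, w i * max ((∑ y ∈ (Oᶜ : Finset Y), p i y)
        - (1/2) * (∑ y, |coarsen (p i) π y - g y|)
        - ∑ y ∈ ((F i)ᶜ : Finset Y), g y) 0 ≤
      (Oᶜ : Finset Y).sup' hU (fun y => ∑ i ∈ Finset.univ.filter (fun i => y ∈ F i), w i)
        + (O.card : ℝ) * (Oᶜ : Finset Y).sup' hU (fun y => ∑ i, w i * p i y) := by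
  classical
  obtain ⟨y₀, hy₀⟩ := id hU
  set U : Finset Y := Oᶜ with hUdef
  set N : ℝ := U.sup' hU (fun y => ∑ i ∈ Finset.univ.filter (fun i => y ∈ F i), w i) with hNdef
  set M : ℝ := U.sup' hU (fun y => ∑ i, w i * p i y) with hMdef
  have hNnn : 0 ≤ N :=
    le_trans (Finset.sum_nonneg fun i _ => hw i)
      (Finset.le_sup' (fun y => ∑ i ∈ Finset.univ.filter (fun i => y ∈ F i), w i) hy₀)
  have hMnn : 0 ≤ M :=
    le_trans (Finset.sum_nonneg fun i _ => mul_nonneg (hw i) (hp i y₀))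
      (Finset.le_sup' (fun y => ∑ i, w i * p i y) hy₀)
  -- abbreviation for the block-ratio coefficient
  have ccnn : ∀ y : Y, (0:ℝ) ≤ ((π y ∩ O).card : ℝ) / ((π y).card : ℝ) := fun y =>
    div_nonneg (Nat.cast_nonneg _) (Nat.cast_nonneg _)
  -- Per-i bound
  have key : ∀ i ∈ Finset.univ, w i * max ((∑ y ∈ U, p i y)
        - (1/2) * (∑ y, |coarsen (p i) π y - g y|)
        - ∑ y ∈ ((F i)ᶜ : Finset Y), g y) 0
      ≤ w i * ((∑ y ∈ U, p i y * (((π y ∩ O).card : ℝ) / ((π y).card : ℝ)))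
          + ∑ y ∈ U ∩ F i, g y) := by
    intro i _
    by_cases hwi : w i = 0
    · simp [hwi]
    refine mul_le_mul_of_nonneg_left ?_ (hw i)
    have hS1nn : (0:ℝ) ≤ ∑ y ∈ U, p i y * (((π y ∩ O).card : ℝ) / ((π y).card : ℝ)) :=
      Finset.sum_nonneg fun y _ => mul_nonneg (hp i y) (ccnn y)
    have hS2nn : (0:ℝ) ≤ ∑ y ∈ U ∩ F i, g y := Finset.sum_nonneg fun y _ => hg y
    refine max_le ?_ (by linarith)
    -- TV bound: ∑_{y∈U} (coarsen - g) ≤ (1/2) ∑ |coarsen - g|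
    have h0 : ∑ y : Y, (coarsen (p i) π y - g y) = 0 := by
      rw [Finset.sum_sub_distrib, coarsen_sum hπ (p i), hp1 i, hg1, sub_self]
    have hsplit : ∑ y ∈ U, (coarsen (p i) π y - g y)
        + ∑ y ∈ Uᶜ, (coarsen (p i) π y - g y) = 0 := by
      rw [Finset.sum_add_sum_compl]; exact h0
    have hA : ∑ y ∈ U, (coarsen (p i) π y - g y) ≤ ∑ y ∈ U, |coarsen (p i) π y - g y| :=
      Finset.sum_le_sum fun y _ => le_abs_self _
    have hB : -∑ y ∈ Uᶜ, (coarsen (p i) π y - g y) ≤ ∑ y ∈ Uᶜ, |coarsen (p i) π y - g y| := by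
      rw [← Finset.sum_neg_distrib]
      exact Finset.sum_le_sum fun y _ => neg_le_abs _
    have habs : ∑ y ∈ U, |coarsen (p i) π y - g y| + ∑ y ∈ Uᶜ, |coarsen (p i) π y - g y|
        = ∑ y : Y, |coarsen (p i) π y - g y| := Finset.sum_add_sum_compl U _
    have htv : ∑ y ∈ U, (coarsen (p i) π y - g y)
        ≤ (1/2) * ∑ y : Y, |coarsen (p i) π y - g y| := by linarith
    -- g part
    have hFc : ((F i)ᶜ : Finset Y) ⊆ U := by
      rw [hUdef]
      exact compl_subset_compl.mpr (hO i hwi)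
    have hUsd : U \ ((F i)ᶜ : Finset Y) = U ∩ F i := by
      ext z; simp
    have hg_part : (∑ y ∈ U, g y) - ∑ y ∈ ((F i)ᶜ : Finset Y), g y = ∑ y ∈ U ∩ F i, g y := by
      rw [← hUsd, Finset.sum_sdiff_eq_sub hFc]
    -- coarsening part
    have h1 : ∑ y ∈ U, (∑ z ∈ π y ∩ U, p i z) / ((π y).card : ℝ)
        ≤ ∑ y ∈ U, coarsen (p i) π y := by
      refine Finset.sum_le_sum fun y _ => ?_
      unfold coarsen
      have hsub : ∑ z ∈ π y ∩ U, p i z ≤ ∑ z ∈ π y, p i z :=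
        Finset.sum_le_sum_of_subset_of_nonneg Finset.inter_subset_left fun z _ _ => hp i z
      have hcpos : (0:ℝ) < ((π y).card : ℝ) := by exact_mod_cast block_card_pos hπ y
      exact (div_le_div_iff_of_pos_right hcpos).mpr hsub
    rw [swap1 hπ (p i) U] at h1
    have hcoarse : (∑ y ∈ U, p i y) - ∑ y ∈ U, coarsen (p i) π y
        ≤ ∑ y ∈ U, p i y * (((π y ∩ O).card : ℝ) / ((π y).card : ℝ)) := by
      have e3 : ∑ y ∈ U, (p i y - p i y * (((π y ∩ U).card : ℝ) / ((π y).card : ℝ)))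
          = ∑ y ∈ U, p i y * (((π y ∩ O).card : ℝ) / ((π y).card : ℝ)) := by
        refine Finset.sum_congr rfl fun y _ => ?_
        have hinter : π y ∩ U = π y \ O := by
          ext z; simp [hUdef]
        have hc : ((π y ∩ O).card : ℝ) + ((π y ∩ U).card : ℝ) = ((π y).card : ℝ) := by
          rw [hinter]
          exact_mod_cast Finset.card_inter_add_card_sdiff (π y) O
        have hcne : ((π y).card : ℝ) ≠ 0 := by
          exact_mod_cast (block_card_pos hπ y).ne'
        field_simp
        linear_combination (-(p i y)) * hc
      have e4 : ∑ y ∈ U, (p i y - p i y * (((π y ∩ U).card : ℝ) / ((π y).card : ℝ)))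
          = (∑ y ∈ U, p i y) - ∑ y ∈ U, p i y * (((π y ∩ U).card : ℝ) / ((π y).card : ℝ)) :=
        Finset.sum_sub_distrib _ _
      linarith [e3, e4, h1]
    have e1 : ∑ y ∈ U, (coarsen (p i) π y - g y)
        = ∑ y ∈ U, coarsen (p i) π y - ∑ y ∈ U, g y := Finset.sum_sub_distrib _ _
    linarith [htv, hcoarse, hg_part, e1]
  refine le_trans (Finset.sum_le_sum key) ?_
  have esum : ∑ i, w i * ((∑ y ∈ U, p i y * (((π y ∩ O).card : ℝ) / ((π y).card : ℝ)))
        + ∑ y ∈ U ∩ F i, g y)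
      = (∑ i, w i * ∑ y ∈ U, p i y * (((π y ∩ O).card : ℝ) / ((π y).card : ℝ)))
        + ∑ i, w i * ∑ y ∈ U ∩ F i, g y := by
    rw [← Finset.sum_add_distrib]
    exact Finset.sum_congr rfl fun i _ => mul_add _ _ _
  rw [esum]
  have hB1 : ∑ i, w i * ∑ y ∈ U, p i y * (((π y ∩ O).card : ℝ) / ((π y).card : ℝ))
      ≤ (O.card : ℝ) * M := by
    have e : ∑ i, w i * ∑ y ∈ U, p i y * (((π y ∩ O).card : ℝ) / ((π y).card : ℝ))
        = ∑ y ∈ U, (∑ i, w i * p i y) * (((π y ∩ O).card : ℝ) / ((π y).card : ℝ)) := by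
      simp_rw [Finset.mul_sum]
      rw [Finset.sum_comm]
      simp_rw [Finset.sum_mul, mul_assoc]
    rw [e]
    have step1 : ∑ y ∈ U, (∑ i, w i * p i y) * (((π y ∩ O).card : ℝ) / ((π y).card : ℝ))
        ≤ ∑ y ∈ U, M * (((π y ∩ O).card : ℝ) / ((π y).card : ℝ)) :=
      Finset.sum_le_sum fun y hy =>
        mul_le_mul_of_nonneg_right (Finset.le_sup' (fun y => ∑ i, w i * p i y) hy) (ccnn y)
    refine step1.trans ?_
    rw [← Finset.mul_sum]
    have hccO : ∑ y : Y, ((π y ∩ O).card : ℝ) / ((π y).card : ℝ) = (O.card : ℝ) := by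
      have h := swap2 hπ (fun z => if z ∈ O then (1:ℝ) else 0)
      simp only [Finset.sum_boole, Finset.filter_mem_eq_inter, Finset.univ_inter] at h
      exact h
    have hccU : ∑ y ∈ U, ((π y ∩ O).card : ℝ) / ((π y).card : ℝ) ≤ (O.card : ℝ) := by
      rw [← hccO]
      exact Finset.sum_le_sum_of_subset_of_nonneg (Finset.subset_univ U)
        fun y _ _ => ccnn y
    calc M * ∑ y ∈ U, ((π y ∩ O).card : ℝ) / ((π y).card : ℝ)
        ≤ M * (O.card : ℝ) := mul_le_mul_of_nonneg_left hccU hMnn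
      _ = (O.card : ℝ) * M := mul_comm _ _
  have hB2 : ∑ i, w i * ∑ y ∈ U ∩ F i, g y ≤ N := by
    have e : ∑ i, w i * ∑ y ∈ U ∩ F i, g y
        = ∑ y ∈ U, (∑ i ∈ Finset.univ.filter (fun i => y ∈ F i), w i) * g y := by
      have e1 : ∀ i : ι, w i * ∑ y ∈ U ∩ F i, g y
          = ∑ y ∈ U, if y ∈ F i then w i * g y else 0 := by
        intro i
        rw [← Finset.sum_filter, Finset.filter_mem_eq_inter, Finset.mul_sum]
      rw [Finset.sum_congr rfl fun i _ => e1 i, Finset.sum_comm]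
      refine Finset.sum_congr rfl fun y _ => ?_
      rw [Finset.sum_filter, Finset.sum_mul]
      refine Finset.sum_congr rfl fun i _ => ?_
      split_ifs with h
      · rfl
      · rw [zero_mul]
    rw [e]
    have step : ∑ y ∈ U, (∑ i ∈ Finset.univ.filter (fun i => y ∈ F i), w i) * g y
        ≤ ∑ y ∈ U, N * g y :=
      Finset.sum_le_sum fun y hy =>
        mul_le_mul_of_nonneg_right
          (Finset.le_sup' (fun y => ∑ i ∈ Finset.univ.filter (fun i => y ∈ F i), w i) hy)
          (hg y)
    refine step.trans ?_
    rw [← Finset.mul_sum]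
    calc N * ∑ y ∈ U, g y ≤ N * 1 := by
          refine mul_le_mul_of_nonneg_left ?_ hNnn
          rw [← hg1]
          exact Finset.sum_le_sum_of_subset_of_nonneg (Finset.subset_univ U) fun y _ _ => hg y
      _ = N := mul_one N
  linarith [hB1, hB2]
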